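/- Let S₁, S₂ ∈ ℝ^{d×d} with S₂ of rank 1, and let n ≥ 1 and (i₁,…,iₙ) ∈ {1,2}ⁿ be any word in which the letter 2 occurs at least twice, say the product contains blocks S₁^{ℓ₁} S₂ S₁^{ℓ₂} S₂ ⋯. Then writing S₂ = u vᵀ, the spectral radius of S_{i₁}⋯S_{iₙ} equals the product over the cyclic blocks of the scalars |vᵀ S₁^{ℓ_k} u|; in particular for the word S₁^{ℓ₁} S₂ S₁^{ℓ₂} S₂ one has ρ(S₁^{ℓ₁} S₂ S₁^{ℓ₂} S₂) = |vᵀ S₁^{ℓ₁} u| · |vᵀ S₁^{ℓ₂} u|. -/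

import Mathlib

open Matrix

/-- The spectral radius of a real square matrix: the maximum of the moduli of its
complex eigenvalues. -/
noncomputable def specRad {d : ℕ} (A : Matrix (Fin d) (Fin d) ℝ) : ENNReal :=
  spectralRadius ℂ (A.map (Complex.ofReal))

lemma aux_spec {d : ℕ} (N : Matrix (Fin d) (Fin d) ℂ) (s : ℂ) (hN : N * N = s • N)
    (hx : s ≠ 0 → ∃ x : Fin d → ℂ, x ≠ 0 ∧ N *ᵥ x = s • x) :
    spectralRadius ℂ N = ‖s‖₊ := by
  have hsub : spectrum ℂ N ⊆ {0, s} := by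
    intro k hk
    by_contra hks
    simp only [Set.mem_insert_iff, Set.mem_singleton_iff, not_or] at hks
    obtain ⟨hk0, hkse⟩ := hks
    have hkms : k - s ≠ 0 := sub_ne_zero.mpr hkse
    apply spectrum.notMem_iff.mpr _ hk
    have key : (algebraMap ℂ _ k - N) * ((k * (k - s))⁻¹ • N + k⁻¹ • (1 : Matrix (Fin d) (Fin d) ℂ)) = 1 := by
      have halg : (algebraMap ℂ (Matrix (Fin d) (Fin d) ℂ)) k = k • 1 := by
        simp [Algebra.algebraMap_eq_smul_one]
      simp only [halg, sub_mul, mul_add, smul_mul_assoc, mul_smul_comm, one_mul,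
        mul_one, hN, smul_smul]
      match_scalars <;> field_simp <;> ring
    exact ⟨⟨_, _, key, mul_eq_one_comm.mp key⟩, rfl⟩
  rcases eq_or_ne s 0 with hs | hs
  · subst hs
    rw [nnnorm_zero, ENNReal.coe_zero]
    rw [spectralRadius]
    refine le_antisymm ?_ zero_le
    refine iSup₂_le fun k hk => ?_
    have := hsub hk
    simp only [Set.mem_insert_iff, Set.mem_singleton_iff, or_self] at this
    simp [this]
  · obtain ⟨x, hx0, hxe⟩ := hx hs
    have hmem : s ∈ spectrum ℂ N := by
      rw [spectrum.mem_iff]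
      intro hunit
      have halg : (algebraMap ℂ (Matrix (Fin d) (Fin d) ℂ)) s = s • 1 := by
        simp [Algebra.algebraMap_eq_smul_one]
      rw [halg] at hunit
      have hker : (s • 1 - N) *ᵥ x = 0 := by
        rw [sub_mulVec, hxe, smul_mulVec, one_mulVec, sub_self]
      have hinj := Matrix.mulVec_injective_iff_isUnit.mpr hunit
      exact hx0 (hinj (by simpa using hker))
    refine le_antisymm ?_ ?_
    · refine iSup₂_le fun k hk => ?_
      have := hsub hk
      simp only [Set.mem_insert_iff, Set.mem_singleton_iff] at this
      rcases this with h | h <;> simp [h]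
    · exact le_iSup₂ (f := fun k (_ : k ∈ spectrum ℂ N) => (‖k‖₊ : ENNReal)) s hmem

lemma mul_vecMulVec' {d : ℕ} (M : Matrix (Fin d) (Fin d) ℝ) (a b : Fin d → ℝ) :
    M * vecMulVec a b = vecMulVec (M *ᵥ a) b := by
  ext i j
  simp [mul_apply, vecMulVec_apply, mulVec, dotProduct, Finset.sum_mul, mul_assoc]

lemma vecMulVec_mul' {d : ℕ} (a b : Fin d → ℝ) (M : Matrix (Fin d) (Fin d) ℝ) :
    vecMulVec a b * M = vecMulVec a (b ᵥ* M) := by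
  ext i j
  simp [mul_apply, vecMulVec_apply, vecMul, dotProduct, Finset.mul_sum, mul_assoc]

lemma vecMulVec_mul_vecMulVec {d : ℕ} (a b c e : Fin d → ℝ) :
    vecMulVec a b * vecMulVec c e = (b ⬝ᵥ c) • vecMulVec a e := by
  ext i j
  simp [mul_apply, vecMulVec_apply, dotProduct, Finset.sum_mul, Finset.mul_sum]
  congr 1; ext k; ring

lemma vecMulVec_mulVec' {d : ℕ} (a b x : Fin d → ℝ) :
    vecMulVec a b *ᵥ x = (b ⬝ᵥ x) • a := by
  ext i
  simp [mulVec, dotProduct, vecMulVec_apply, Finset.sum_mul, Finset.mul_sum, mul_assoc]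
  exact Finset.sum_congr rfl fun k _ => by ring

lemma smul_vecMulVec' {d : ℕ} (t : ℝ) (a b : Fin d → ℝ) :
    vecMulVec (t • a) b = t • vecMulVec a b := by
  ext i j
  simp [vecMulVec_apply, Matrix.smul_apply]
  ring

theorem stmt5' {d : ℕ} (u v : Fin d → ℝ) (hu : u ≠ 0) (hv : v ≠ 0)
    (S₁ S₂ : Matrix (Fin d) (Fin d) ℝ) (hS₂ : S₂ = vecMulVec u v) :
    ∀ ℓ₁ ℓ₂ : ℕ,
      spectralRadius ℂ ((S₁ ^ ℓ₁ * S₂ * (S₁ ^ ℓ₂) * S₂).map (Complex.ofReal)) =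
        ENNReal.ofReal (|v ⬝ᵥ (S₁ ^ ℓ₁).mulVec u| * |v ⬝ᵥ (S₁ ^ ℓ₂).mulVec u|) := by
  intro ℓ₁ ℓ₂
  set w : Fin d → ℝ := (S₁ ^ ℓ₁) *ᵥ u with hw
  set c : ℝ := v ⬝ᵥ (S₁ ^ ℓ₂) *ᵥ u with hc
  set s₀ : ℝ := c * (v ⬝ᵥ w) with hs₀
  have hA : S₁ ^ ℓ₁ * S₂ * (S₁ ^ ℓ₂) * S₂ = c • vecMulVec w v := by
    rw [hS₂, mul_vecMulVec']
    have hvec : (S₁ ^ ℓ₁ * vecMulVec u v * S₁ ^ ℓ₂) *ᵥ u = c • w := by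
      rw [← Matrix.mulVec_mulVec, ← Matrix.mulVec_mulVec, vecMulVec_mulVec',
        Matrix.mulVec_smul, ← hc, hw]
    rw [hvec, smul_vecMulVec']
  set A : Matrix (Fin d) (Fin d) ℝ := S₁ ^ ℓ₁ * S₂ * (S₁ ^ ℓ₂) * S₂ with hAdef
  have hAA : A * A = s₀ • A := by
    rw [hA, smul_mul_assoc, mul_smul_comm, vecMulVec_mul_vecMulVec, hs₀,
      smul_smul, smul_smul, smul_smul]
    ring_nf
  have hAvec : A *ᵥ w = s₀ • w := by
    rw [hA, smul_mulVec, vecMulVec_mulVec', smul_smul, hs₀]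
  -- pass to ℂ
  set N : Matrix (Fin d) (Fin d) ℂ := A.map (Complex.ofReal) with hN
  have hmap : N * N = (s₀ : ℂ) • N := by
    ext i j
    have h := congrFun (congrFun hAA i) j
    simp only [mul_apply, Matrix.smul_apply, smul_eq_mul] at h ⊢
    simp only [hN, Matrix.map_apply]
    push_cast
    exact_mod_cast h
  have heig : (s₀ : ℂ) ≠ 0 → ∃ x : Fin d → ℂ, x ≠ 0 ∧ N *ᵥ x = (s₀ : ℂ) • x := by
    intro hs
    refine ⟨fun i => (w i : ℂ), ?_, ?_⟩
    · have hw0 : w ≠ 0 := by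
        intro h
        apply hs
        rw [hs₀, h]
        simp
      intro h
      apply hw0
      ext i
      have := congrFun h i
      simpa using this
    · ext i
      have := RingHom.map_mulVec (Complex.ofRealHom) A w i
      rw [congrFun hAvec i] at this
      simp only [Pi.smul_apply, smul_eq_mul, Complex.ofRealHom_eq_coe, Complex.ofReal_mul] at this
      simp only [Pi.smul_apply, smul_eq_mul]
      exact this.symm
  rw [aux_spec N (s₀ : ℂ) hmap heig]
  rw [show |v ⬝ᵥ (S₁ ^ ℓ₁).mulVec u| * |v ⬝ᵥ (S₁ ^ ℓ₂).mulVec u| = |s₀| from by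
    rw [hs₀, abs_mul, hc, hw]; ring]
  rw [← Real.norm_eq_abs, ENNReal.ofReal_eq_coe_nnreal (norm_nonneg _)]
  congr 1
  ext
  simp [Real.norm_eq_abs]

theorem stmt5 {d : ℕ} (u v : Fin d → ℝ) (hu : u ≠ 0) (hv : v ≠ 0)
    (S₁ S₂ : Matrix (Fin d) (Fin d) ℝ) (hS₂ : S₂ = vecMulVec u v) :
    ∀ ℓ₁ ℓ₂ : ℕ,
      specRad (S₁ ^ ℓ₁ * S₂ * (S₁ ^ ℓ₂) * S₂) =
        ENNReal.ofReal (|v ⬝ᵥ (S₁ ^ ℓ₁).mulVec u| * |v ⬝ᵥ (S₁ ^ ℓ₂).mulVec u|) := by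
  intro ℓ₁ ℓ₂
  rw [specRad]
  exact stmt5' u v hu hv S₁ S₂ hS₂ ℓ₁ ℓ₂
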